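/- Let A_cl be an n×n real matrix, P a symmetric positive definite matrix, and Q a symmetric positive definite matrix satisfying the Lyapunov equation P·A_cl + A_clᵀ·P = −Q. Suppose R : ℝ^n → ℝ^n satisfies ‖R(x)‖ ≤ σ‖x‖ for all x with ‖x‖ ≤ Γ, where σ > 0 satisfies λ_min(Q) > 2σ·λ_max(P). Then for every x with 0 < ‖x‖ ≤ Γ, the derivative of V(x) = xᵀPx along the vector field g(x) = A_cl·x + R(x), namely W(x) = xᵀP·g(x) + g(x)ᵀP·x, satisfies W(x) ≤ −(λ_min(Q) − 2σ·λ_max(P))·‖x‖² < 0. -/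

import Mathlib

open Matrix
open Matrix
variable {n : ℕ}

private lemma star_eq_transpose_real' (U : Matrix (Fin n) (Fin n) ℝ) : star U = Uᵀ := by
  ext i j; simp [Matrix.star_apply]

private lemma spectral_sum' (A : Matrix (Fin n) (Fin n) ℝ) (hA : A.IsHermitian) (x y : Fin n → ℝ) :
    x ⬝ᵥ (A *ᵥ y) = ∑ i, hA.eigenvalues i *
      (((star (hA.eigenvectorUnitary : Matrix (Fin n) (Fin n) ℝ)) *ᵥ x) i *
       ((star (hA.eigenvectorUnitary : Matrix (Fin n) (Fin n) ℝ)) *ᵥ y) i) := by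
  set U := (hA.eigenvectorUnitary : Matrix (Fin n) (Fin n) ℝ) with hU
  conv_lhs => rw [hA.spectral_theorem, Unitary.conjStarAlgAut_apply]
  rw [star_eq_transpose_real']
  rw [← Matrix.mulVec_mulVec, ← Matrix.mulVec_mulVec, Matrix.dotProduct_mulVec (A := U),
    ← Matrix.transpose_transpose U, Matrix.vecMul_transpose]
  simp only [Matrix.transpose_transpose, dotProduct,
    RCLike.ofReal_real_eq_id, Function.comp_apply, id_eq, Matrix.mulVec_diagonal]
  refine Finset.sum_congr rfl fun i _ => by ring

private lemma unitary_norm' (A : Matrix (Fin n) (Fin n) ℝ) (hA : A.IsHermitian) (x : Fin n → ℝ) :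
    ((star (hA.eigenvectorUnitary : Matrix (Fin n) (Fin n) ℝ)) *ᵥ x) ⬝ᵥ
    ((star (hA.eigenvectorUnitary : Matrix (Fin n) (Fin n) ℝ)) *ᵥ x) = x ⬝ᵥ x := by
  rw [Matrix.dotProduct_mulVec, Matrix.vecMul_mulVec, star_eq_transpose_real',
    Matrix.transpose_transpose, ← star_eq_transpose_real',
    (Matrix.mem_unitaryGroup_iff).mp hA.eigenvectorUnitary.2, Matrix.vecMul_one]

private lemma dot_self_eq' (x : EuclideanSpace ℝ (Fin n)) :
    (x : Fin n → ℝ) ⬝ᵥ (x : Fin n → ℝ) = ‖x‖ ^ 2 := by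
  rw [EuclideanSpace.norm_eq, Real.sq_sqrt (by positivity)]
  simp [dotProduct, sq]

private lemma quad_lower' (A : Matrix (Fin n) (Fin n) ℝ) (hA : A.IsHermitian) (c : ℝ)
    (hc : ∀ i, c ≤ hA.eigenvalues i) (x : EuclideanSpace ℝ (Fin n)) :
    c * ‖x‖ ^ 2 ≤ (x : Fin n → ℝ) ⬝ᵥ (A *ᵥ (x : Fin n → ℝ)) := by
  rw [spectral_sum' A hA, ← dot_self_eq' x, ← unitary_norm' A hA x]
  set u := (star (hA.eigenvectorUnitary : Matrix (Fin n) (Fin n) ℝ)) *ᵥ (x : Fin n → ℝ)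
  rw [dotProduct, Finset.mul_sum]
  refine Finset.sum_le_sum fun i _ => ?_
  have := hc i
  nlinarith [sq_nonneg (u i)]

private lemma bilin_le' (A : Matrix (Fin n) (Fin n) ℝ) (hA : A.IsHermitian) (M : ℝ)
    (hM0 : 0 ≤ M) (hM : ∀ i, |hA.eigenvalues i| ≤ M) (x y : EuclideanSpace ℝ (Fin n)) :
    (x : Fin n → ℝ) ⬝ᵥ (A *ᵥ (y : Fin n → ℝ)) ≤ M * (‖x‖ * ‖y‖) := by
  rw [spectral_sum' A hA]
  set u := (star (hA.eigenvectorUnitary : Matrix (Fin n) (Fin n) ℝ)) *ᵥ (x : Fin n → ℝ) with hu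
  set v := (star (hA.eigenvectorUnitary : Matrix (Fin n) (Fin n) ℝ)) *ᵥ (y : Fin n → ℝ) with hv
  have h1 : ∑ i, hA.eigenvalues i * (u i * v i) ≤ M * ∑ i, |u i| * |v i| := by
    rw [Finset.mul_sum]
    refine Finset.sum_le_sum fun i _ => ?_
    calc hA.eigenvalues i * (u i * v i) ≤ |hA.eigenvalues i * (u i * v i)| := le_abs_self _
      _ = |hA.eigenvalues i| * (|u i| * |v i|) := by rw [abs_mul, abs_mul]
      _ ≤ M * (|u i| * |v i|) := by
          have : (0:ℝ) ≤ |u i| * |v i| := by positivity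
          exact mul_le_mul_of_nonneg_right (hM i) this
      _ = M * (|u i| * |v i|) := rfl
  have h2 : ∑ i, |u i| * |v i| ≤
      Real.sqrt (∑ i, |u i| ^ 2) * Real.sqrt (∑ i, |v i| ^ 2) :=
    Real.sum_mul_le_sqrt_mul_sqrt _ _ _
  have hux : Real.sqrt (∑ i, |u i| ^ 2) = ‖x‖ := by
    have : ∑ i, |u i| ^ 2 = ‖x‖ ^ 2 := by
      rw [← dot_self_eq' x, ← unitary_norm' A hA x, dotProduct]
      exact Finset.sum_congr rfl fun i _ => by rw [sq_abs]; ring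
    rw [this, Real.sqrt_sq (norm_nonneg x)]
  have hvy : Real.sqrt (∑ i, |v i| ^ 2) = ‖y‖ := by
    have : ∑ i, |v i| ^ 2 = ‖y‖ ^ 2 := by
      rw [← dot_self_eq' y, ← unitary_norm' A hA y, dotProduct]
      exact Finset.sum_congr rfl fun i _ => by rw [sq_abs]; ring
    rw [this, Real.sqrt_sq (norm_nonneg y)]
  calc ∑ i, hA.eigenvalues i * (u i * v i) ≤ M * ∑ i, |u i| * |v i| := h1
    _ ≤ M * (‖x‖ * ‖y‖) := by
        rw [← hux, ← hvy]
        exact mul_le_mul_of_nonneg_left h2 hM0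



/-- Lyapunov derivative estimate: if `P A_cl + A_clᵀ P = -Q` with `P, Q` symmetric
positive definite and the remainder `R` satisfies `‖R x‖ ≤ σ ‖x‖` on the ball of
radius `Γ`, with `λ_min(Q) > 2 σ λ_max(P)`, then the derivative of `V(x) = xᵀPx`
along `g(x) = A_cl x + R x` is negative on the punctured ball. -/
theorem lyapunov_derivative_negative (n : ℕ)
    (Acl P Q : Matrix (Fin n) (Fin n) ℝ)
    (hP : P.PosDef) (hQ : Q.PosDef)
    (hLyap : P * Acl + Acl.transpose * P = -Q)
    (R : EuclideanSpace ℝ (Fin n) → EuclideanSpace ℝ (Fin n))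
    (σ Γ : ℝ) (hσ : 0 < σ) (hΓ : 0 < Γ)
    (hR : ∀ x : EuclideanSpace ℝ (Fin n), ‖x‖ ≤ Γ → ‖R x‖ ≤ σ * ‖x‖)
    (hgap : 2 * σ * (⨆ i, hP.1.eigenvalues i) < ⨅ i, hQ.1.eigenvalues i)
    (g : EuclideanSpace ℝ (Fin n) → Fin n → ℝ)
    (hg : ∀ y : EuclideanSpace ℝ (Fin n), g y = Acl.mulVec (y : Fin n → ℝ) + WithLp.equiv 2 (Fin n → ℝ) (R y))
    (x : EuclideanSpace ℝ (Fin n)) (hx0 : 0 < ‖x‖) (hxΓ : ‖x‖ ≤ Γ) :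
    dotProduct (x : Fin n → ℝ) (P.mulVec (g x)) +
      dotProduct (g x) (P.mulVec (x : Fin n → ℝ))
      ≤ -((⨅ i, hQ.1.eigenvalues i) - 2 * σ * (⨆ i, hP.1.eigenvalues i)) * ‖x‖ ^ 2 ∧
    -((⨅ i, hQ.1.eigenvalues i) - 2 * σ * (⨆ i, hP.1.eigenvalues i)) * ‖x‖ ^ 2 < 0 := by
  have hne : Nonempty (Fin n) := by
    by_contra h
    rw [not_nonempty_iff] at h
    have : x = 0 := Subsingleton.elim x 0
    rw [this, norm_zero] at hx0
    exact lt_irrefl 0 hx0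
  set lQ := ⨅ i, hQ.1.eigenvalues i with hlQ
  set lP := ⨆ i, hP.1.eigenvalues i with hlP
  set r : Fin n → ℝ := WithLp.equiv 2 (Fin n → ℝ) (R x) with hr
  -- basic eigenvalue facts
  have hQlow : ∀ i, lQ ≤ hQ.1.eigenvalues i := fun i =>
    ciInf_le (Set.Finite.bddBelow (Set.finite_range _)) i
  have hPup : ∀ i, hP.1.eigenvalues i ≤ lP := fun i =>
    le_ciSup (Set.Finite.bddAbove (Set.finite_range _)) i
  have hPpos : ∀ i, 0 < hP.1.eigenvalues i := hP.eigenvalues_pos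
  have hlP0 : 0 ≤ lP := le_trans (hPpos (Classical.arbitrary _)).le (hPup _)
  have hPabs : ∀ i, |hP.1.eigenvalues i| ≤ lP := fun i => by
    rw [abs_of_pos (hPpos i)]; exact hPup i
  -- the key algebraic identity
  have key : (x : Fin n → ℝ) ⬝ᵥ (P *ᵥ g x) + (g x) ⬝ᵥ (P *ᵥ (x : Fin n → ℝ)) =
      -((x : Fin n → ℝ) ⬝ᵥ (Q *ᵥ (x : Fin n → ℝ)))
      + ((x : Fin n → ℝ) ⬝ᵥ (P *ᵥ r) + r ⬝ᵥ (P *ᵥ (x : Fin n → ℝ))) := by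
    rw [hg x]
    have h1 : (Acl *ᵥ (x : Fin n → ℝ)) ⬝ᵥ (P *ᵥ (x : Fin n → ℝ))
        = (x : Fin n → ℝ) ⬝ᵥ ((Aclᵀ * P) *ᵥ (x : Fin n → ℝ)) := by
      rw [← Matrix.mulVec_mulVec, Matrix.dotProduct_mulVec (A := Aclᵀ),
        Matrix.vecMul_transpose]
    have h2 : (x : Fin n → ℝ) ⬝ᵥ (P *ᵥ (Acl *ᵥ (x : Fin n → ℝ)))
        = (x : Fin n → ℝ) ⬝ᵥ ((P * Acl) *ᵥ (x : Fin n → ℝ)) := by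
      rw [Matrix.mulVec_mulVec]
    have h3 : (x : Fin n → ℝ) ⬝ᵥ ((P * Acl) *ᵥ (x : Fin n → ℝ))
        + (x : Fin n → ℝ) ⬝ᵥ ((Aclᵀ * P) *ᵥ (x : Fin n → ℝ))
        = -((x : Fin n → ℝ) ⬝ᵥ (Q *ᵥ (x : Fin n → ℝ))) := by
      rw [← dotProduct_add, ← Matrix.add_mulVec, hLyap, Matrix.neg_mulVec,
        dotProduct_neg]
    simp only [Matrix.mulVec_add, dotProduct_add, add_dotProduct]
    rw [h1, h2]
    linarith [h3]
  -- bounds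
  have hq : lQ * ‖x‖ ^ 2 ≤ (x : Fin n → ℝ) ⬝ᵥ (Q *ᵥ (x : Fin n → ℝ)) :=
    quad_lower' Q hQ.1 lQ hQlow x
  have hRx : ‖R x‖ ≤ σ * ‖x‖ := hR x hxΓ
  have hp1 : (x : Fin n → ℝ) ⬝ᵥ (P *ᵥ r) ≤ lP * (‖x‖ * ‖R x‖) :=
    bilin_le' P hP.1 lP hlP0 hPabs x (R x)
  have hp2 : r ⬝ᵥ (P *ᵥ (x : Fin n → ℝ)) ≤ lP * (‖R x‖ * ‖x‖) :=
    bilin_le' P hP.1 lP hlP0 hPabs (R x) x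
  have hbound : lP * (‖x‖ * ‖R x‖) ≤ σ * lP * ‖x‖ ^ 2 := by
    have h := mul_le_mul_of_nonneg_left hRx (mul_nonneg hlP0 (norm_nonneg x))
    nlinarith [norm_nonneg x, norm_nonneg (R x)]
  have hbound2 : lP * (‖R x‖ * ‖x‖) ≤ σ * lP * ‖x‖ ^ 2 := by
    nlinarith [norm_nonneg x, norm_nonneg (R x), mul_le_mul_of_nonneg_left hRx (mul_nonneg hlP0 (norm_nonneg x))]
  constructor
  · rw [key]
    nlinarith [hq, hp1, hp2, hbound, hbound2]
  · have hx2 : 0 < ‖x‖ ^ 2 := by positivity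
    have : 0 < lQ - 2 * σ * lP := by linarith
    nlinarith
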